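/- Under the C-weak triangle inequality, strict contraction d̃(ν₁P, ν₂P) ≤ ᾱ d̃(ν₁,ν₂), the one-step closeness bound d̃(δ_x P, δ_x P_ε) ≤ ε(1 + δ V(x)), and the drift P_ε V ≤ γ_ε V + K_ε with γ_ε ∈ (0,1): for all n ≥ 1, d̃(δ_x P^n, δ_x P_ε^n) ≤ ε (Σ_{j=1}^n C^j ᾱ^{j−1}) (1 + δ(K_ε/(1−γ_ε) + V(x))). -/

import Mathlib

open MeasureTheory

private lemma ae_dirac_prop' {X : Type*} [MeasurableSpace X] {x : X} {p : X → Prop}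
    (h : ∀ᵐ y ∂(Measure.dirac x), p y) : p x := by
  rw [MeasureTheory.ae_iff] at h
  obtain ⟨N, hsub, hNm, hN0⟩ := MeasureTheory.exists_measurable_superset_of_null h
  by_contra hp
  have hxN : x ∈ N := hsub hp
  have h1 : (Measure.dirac x) N = N.indicator 1 x := Measure.dirac_apply' x hNm
  rw [hN0, Set.indicator_of_mem hxN] at h1
  simp at h1

private lemma integral_dirac_le' {X : Type*} [MeasurableSpace X] (V : X → ℝ)
    (hV : ∀ y, 0 ≤ V y) (x : X) : ∫ y, V y ∂(Measure.dirac x) ≤ V x := by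
  by_cases h : AEStronglyMeasurable V (Measure.dirac x)
  · have hmk := h.ae_eq_mk
    have h1 : ∫ y, V y ∂(Measure.dirac x) = ∫ y, h.mk V y ∂(Measure.dirac x) :=
      integral_congr_ae hmk
    have h2 : ∫ y, h.mk V y ∂(Measure.dirac x) = h.mk V x :=
      integral_dirac' _ _ h.stronglyMeasurable_mk
    have h3 : V x = h.mk V x := ae_dirac_prop' (p := fun y => V y = h.mk V y) hmk
    rw [h1, h2, ← h3]
  · rw [integral_non_aestronglyMeasurable h]
    exact hV x

set_option maxHeartbeats 1000000 in
/-- For `C < 1`, the weak triangle inequality together with the strict contraction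
forces `dt (P μ) ν ≤ 0` for all `μ ν`. -/
private lemma dt_nonpos_of_lt_one {Y : Type*} (dt : Y → Y → ℝ) (P : Y → Y) (C α : ℝ)
    (hC : 0 < C) (hC1 : C < 1) (hα0 : 0 < α) (hα1 : α < 1)
    (hwtri : ∀ μ ν ρ, dt μ ν ≤ C * (dt μ ρ + dt ρ ν))
    (hcontr : ∀ μ ν, dt (P μ) (P ν) ≤ α * dt μ ν)
    (μ ν : Y) : dt (P μ) ν ≤ 0 := by
  set γ : ℝ := max C α with hγdef
  have hγ0 : 0 < γ := lt_max_of_lt_left hC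
  have hγ1 : γ < 1 := max_lt hC1 hα1
  set β : ℝ := (1 + γ) / 2 with hβdef
  have hβγ : γ < β := by rw [hβdef]; linarith
  have hβ0 : 0 < β := hγ0.trans hβγ
  have hβ1 : β < 1 := by rw [hβdef]; linarith
  have hCβ : C < β := lt_of_le_of_lt (le_max_left _ _) hβγ
  have hαβ : α < β := lt_of_le_of_lt (le_max_right _ _) hβγ
  have h1C : (0:ℝ) < 1 - C := by linarith
  set K : ℝ := C / (1 - C) with hKdef
  have hK0 : 0 ≤ K := div_nonneg hC.le h1C.le
  -- L1 : dt σ τ ≤ K * dt σ σ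
  have L1 : ∀ σ τ : Y, dt σ τ ≤ K * dt σ σ := by
    intro σ τ
    have h := hwtri σ τ σ
    have h2 : dt σ τ ≤ C * dt σ σ / (1 - C) := by
      rw [le_div_iff₀ h1C]; nlinarith
    calc dt σ τ ≤ C * dt σ σ / (1 - C) := h2
      _ = K * dt σ σ := by rw [hKdef]; ring
  -- iterated contraction
  have Lcontr : ∀ (k : ℕ) (σ τ : Y), dt (P^[k] σ) (P^[k] τ) ≤ α ^ k * dt σ τ := by
    intro k
    induction k with
    | zero => intro σ τ; simp
    | succ k ih =>
      intro σ τ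
      rw [Function.iterate_succ_apply', Function.iterate_succ_apply']
      have h1 := hcontr (P^[k] σ) (P^[k] τ)
      calc dt (P (P^[k] σ)) (P (P^[k] τ)) ≤ α * dt (P^[k] σ) (P^[k] τ) := h1
        _ ≤ α * (α ^ k * dt σ τ) := mul_le_mul_of_nonneg_left (ih σ τ) hα0.le
        _ = α ^ (k + 1) * dt σ τ := by ring
  set U : ℝ := max (dt μ (P μ)) 0 with hUdef
  have hU0 : 0 ≤ U := le_max_right _ _
  have hU1 : dt μ (P μ) ≤ U := le_max_left _ _
  set A : ℝ := max (1 / β) (C / (β - C)) with hAdef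
  have hA0 : 0 < A := lt_of_lt_of_le (by positivity) (le_max_left _ _)
  have hA1 : 1 ≤ A * β := by
    have h := le_max_left (1 / β) (C / (β - C))
    calc (1:ℝ) = (1 / β) * β := by field_simp
      _ ≤ A * β := mul_le_mul_of_nonneg_right h hβ0.le
  have hA2 : C ≤ A * (β - C) := by
    have h := le_max_right (1 / β) (C / (β - C))
    rw [← hAdef] at h
    have hβC : (0:ℝ) < β - C := by linarith
    exact (div_le_iff₀ hβC).mp h
  -- L3 : dt μ (P^[k] μ) ≤ A * β ^ k * U for k ≥ 1
  have L3 : ∀ k : ℕ, 1 ≤ k → dt μ (P^[k] μ) ≤ A * β ^ k * U := by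
    intro k hk
    induction k, hk using Nat.le_induction with
    | base =>
      simp only [Function.iterate_one, pow_one]
      have h1 : U * 1 ≤ U * (A * β) := mul_le_mul_of_nonneg_left hA1 hU0
      calc dt μ (P μ) ≤ U := hU1
        _ = U * 1 := by ring
        _ ≤ U * (A * β) := h1
        _ = A * β * U := by ring
    | succ k hk ih =>
      have hstep0 := hwtri μ (P^[k+1] μ) (P^[k] μ)
      have hcc : dt (P^[k] μ) (P^[k+1] μ) ≤ α ^ k * U := by
        have h1 : dt (P^[k] μ) (P^[k] (P μ)) ≤ α ^ k * dt μ (P μ) := Lcontr k μ (P μ)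
        rw [Function.iterate_succ_apply]
        exact h1.trans (mul_le_mul_of_nonneg_left hU1 (pow_nonneg hα0.le k))
      have hpow : α ^ k ≤ β ^ k := pow_le_pow_left₀ hα0.le hαβ.le k
      have hβk : (0:ℝ) < β ^ k := pow_pos hβ0 k
      have hh1 : 0 ≤ (A * (β - C) - C) * (U * β ^ k) :=
        mul_nonneg (by linarith) (mul_nonneg hU0 hβk.le)
      have hh2 : 0 ≤ C * U * (β ^ k - α ^ k) :=
        mul_nonneg (mul_nonneg hC.le hU0) (by linarith)
      have hmid : dt μ (P^[k+1] μ) ≤ C * (A * β ^ k * U + α ^ k * U) :=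
        hstep0.trans (mul_le_mul_of_nonneg_left (add_le_add ih hcc) hC.le)
      calc dt μ (P^[k+1] μ) ≤ C * (A * β ^ k * U + α ^ k * U) := hmid
        _ ≤ A * β ^ (k + 1) * U := by rw [pow_succ]; nlinarith [hh1, hh2]
  set S : ℝ := max (dt (P μ) (P μ)) 0 with hSdef
  have hS0 : 0 ≤ S := le_max_right _ _
  have hS1 : dt (P μ) (P μ) ≤ S := le_max_left _ _
  set c : ℝ := C * (α * A * U + K * S) with hcdef
  have key : ∀ k : ℕ, 1 ≤ k → dt (P μ) ν ≤ c * β ^ k := by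
    intro k hk
    have hw := hwtri (P μ) ν (P^[k+1] μ)
    have hβk : (0:ℝ) < β ^ k := pow_pos hβ0 k
    have hαk : (0:ℝ) < α ^ k := pow_pos hα0 k
    have hpow : α ^ k ≤ β ^ k := pow_le_pow_left₀ hα0.le hαβ.le k
    -- first term
    have hterm1 : dt (P μ) (P^[k+1] μ) ≤ α * (A * β ^ k * U) := by
      rw [Function.iterate_succ_apply']
      exact (hcontr μ (P^[k] μ)).trans (mul_le_mul_of_nonneg_left (L3 k hk) hα0.le)
    -- second term
    have hterm2 : dt (P^[k+1] μ) ν ≤ K * (α ^ k * S) := by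
      have h1 : dt (P^[k+1] μ) ν ≤ K * dt (P^[k+1] μ) (P^[k+1] μ) := L1 _ _
      have h2 : dt (P^[k+1] μ) (P^[k+1] μ) ≤ α ^ k * dt (P μ) (P μ) := by
        rw [Function.iterate_succ_apply]
        exact Lcontr k (P μ) (P μ)
      have h3 : dt (P^[k+1] μ) (P^[k+1] μ) ≤ α ^ k * S :=
        h2.trans (mul_le_mul_of_nonneg_left hS1 (pow_nonneg hα0.le k))
      exact h1.trans (mul_le_mul_of_nonneg_left h3 hK0)
    have hcomb : dt (P μ) ν ≤ C * (α * (A * β ^ k * U) + K * (α ^ k * S)) :=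
      hw.trans (mul_le_mul_of_nonneg_left (add_le_add hterm1 hterm2) hC.le)
    have hc3 : K * (α ^ k * S) ≤ K * (β ^ k * S) :=
      mul_le_mul_of_nonneg_left (mul_le_mul_of_nonneg_right hpow hS0) hK0
    calc dt (P μ) ν ≤ C * (α * (A * β ^ k * U) + K * (α ^ k * S)) := hcomb
      _ ≤ C * (α * (A * β ^ k * U) + K * (β ^ k * S)) :=
        mul_le_mul_of_nonneg_left (add_le_add le_rfl hc3) hC.le
      _ = c * β ^ k := by rw [hcdef]; ring
  have htend : Filter.Tendsto (fun k : ℕ => c * β ^ k) Filter.atTop (nhds 0) := by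
    have h := tendsto_pow_atTop_nhds_zero_of_lt_one hβ0.le hβ1
    simpa using h.const_mul c
  exact ge_of_tendsto htend (Filter.eventually_atTop.mpr ⟨1, key⟩)

open MeasureTheory

/-- n-step closeness bound under a weak triangle inequality, strict contraction,
one-step closeness, and a drift condition for `Pε`. -/
theorem stmt_10 {X : Type*} [MeasurableSpace X]
    (dt : Measure X → Measure X → ℝ)
    (P Pe : Measure X → Measure X)
    (hprobP : ∀ μ : Measure X, IsProbabilityMeasure μ → IsProbabilityMeasure (P μ))
    (hprobPe : ∀ μ : Measure X, IsProbabilityMeasure μ → IsProbabilityMeasure (Pe μ))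
    (V : X → ℝ) (hV : ∀ x, 0 ≤ V x)
    (C α ε δ γe Ke : ℝ) (hC : 0 < C) (hα0 : 0 < α) (hα1 : α < 1)
    (hε : 0 ≤ ε) (hδ : 0 ≤ δ) (hγe0 : 0 < γe) (hγe1 : γe < 1) (hKe : 0 < Ke)
    (hwtri : ∀ μ ν ρ : Measure X, dt μ ν ≤ C * (dt μ ρ + dt ρ ν))
    (hcontr : ∀ μ ν : Measure X, dt (P μ) (P ν) ≤ α * dt μ ν)
    (hclose : ∀ μ : Measure X, IsProbabilityMeasure μ →
      dt (P μ) (Pe μ) ≤ ε * (1 + δ * ∫ x, V x ∂μ))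
    (hdrift : ∀ μ : Measure X, IsProbabilityMeasure μ →
      ∫ x, V x ∂(Pe μ) ≤ γe * ∫ x, V x ∂μ + Ke) :
    ∀ n : ℕ, 1 ≤ n → ∀ x : X,
      dt (P^[n] (Measure.dirac x)) (Pe^[n] (Measure.dirac x)) ≤
        ε * (∑ j ∈ Finset.range n, C ^ (j + 1) * α ^ j)
          * (1 + δ * (Ke / (1 - γe) + V x)) := by
  intro n hn x
  have h1γ : (0:ℝ) < 1 - γe := by linarith
  have hdiv : (0:ℝ) ≤ Ke / (1 - γe) := div_nonneg hKe.le h1γ.le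
  have hsum0 : (0:ℝ) ≤ ∑ j ∈ Finset.range n, C ^ (j + 1) * α ^ j :=
    Finset.sum_nonneg fun j _ => mul_nonneg (pow_nonneg hC.le _) (pow_nonneg hα0.le _)
  have hM0 : (0:ℝ) ≤ Ke / (1 - γe) + V x := add_nonneg hdiv (hV x)
  have hM'1 : (1:ℝ) ≤ 1 + δ * (Ke / (1 - γe) + V x) :=
    le_add_of_nonneg_right (mul_nonneg hδ hM0)
  rcases lt_or_ge C 1 with hC1 | hC1
  · -- C < 1 : the left-hand side is nonpositive
    obtain ⟨m, rfl⟩ : ∃ m, n = m + 1 := ⟨n - 1, (Nat.succ_pred_eq_of_pos hn).symm⟩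
    have h0 : dt (P^[m+1] (Measure.dirac x)) (Pe^[m+1] (Measure.dirac x)) ≤ 0 := by
      rw [Function.iterate_succ_apply']
      exact dt_nonpos_of_lt_one dt P C α hC hC1 hα0 hα1 hwtri hcontr _ _
    refine h0.trans ?_
    have : (0:ℝ) ≤ 1 + δ * (Ke / (1 - γe) + V x) := by linarith
    positivity
  · -- C ≥ 1 : standard induction
    have probIter : ∀ m : ℕ, IsProbabilityMeasure (Pe^[m] (Measure.dirac x)) := by
      intro m
      induction m with
      | zero => simpa using (Measure.dirac.isProbabilityMeasure (x := x))
      | succ m ih => rw [Function.iterate_succ_apply']; exact hprobPe _ ih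
    set M : ℝ := Ke / (1 - γe) + V x with hMdef
    have hVxM : V x ≤ M := by rw [hMdef]; linarith
    have hIM : ∀ m : ℕ, ∫ y, V y ∂(Pe^[m] (Measure.dirac x)) ≤ M := by
      intro m
      induction m with
      | zero =>
        simpa using (integral_dirac_le' V hV x).trans hVxM
      | succ m ih =>
        rw [Function.iterate_succ_apply']
        have h1 := hdrift _ (probIter m)
        have h2 : γe * ∫ y, V y ∂(Pe^[m] (Measure.dirac x)) ≤ γe * M :=
          mul_le_mul_of_nonneg_left ih hγe0.le
        have h3 : (1 - γe) * (Ke / (1 - γe)) = Ke := by field_simp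
        have h4 : γe * M + Ke ≤ M := by
          have hvx := hV x
          rw [hMdef]; nlinarith
        linarith
    clear hsum0
    induction n, hn using Nat.le_induction with
    | base =>
      simp only [Function.iterate_one, Finset.sum_range_one, pow_one, pow_zero, mul_one]
      have h1 := hclose (Measure.dirac x) inferInstance
      have h2 : ∫ y, V y ∂(Measure.dirac x) ≤ M := by
        simpa using hIM 0
      have h2' : (0:ℝ) ≤ ∫ y, V y ∂(Measure.dirac x) := integral_nonneg hV
      have h5 : ε * (1 + δ * ∫ y, V y ∂(Measure.dirac x)) ≤ ε * (1 + δ * M) := by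
        have hd : δ * ∫ y, V y ∂(Measure.dirac x) ≤ δ * M := mul_le_mul_of_nonneg_left h2 hδ
        have := mul_nonneg hε (sub_nonneg.mpr hd)
        nlinarith
      have h6 : ε * (1 + δ * M) ≤ ε * C * (1 + δ * M) := by
        have h7 : (0:ℝ) ≤ ε * (1 + δ * M) := mul_nonneg hε (by linarith)
        nlinarith
      calc dt (P (Measure.dirac x)) (Pe (Measure.dirac x))
          ≤ ε * (1 + δ * ∫ y, V y ∂(Measure.dirac x)) := h1
        _ ≤ ε * (1 + δ * M) := h5
        _ ≤ ε * C * (1 + δ * M) := h6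
        _ = ε * C ^ (0 + 1) * (1 + δ * M) := by norm_num
    | succ n hn ih =>
      set Sn : ℝ := ∑ j ∈ Finset.range n, C ^ (j + 1) * α ^ j with hSndef
      have hSn0 : (0:ℝ) ≤ Sn :=
        Finset.sum_nonneg fun j _ => mul_nonneg (pow_nonneg hC.le _) (pow_nonneg hα0.le _)
      have hSsucc : (∑ j ∈ Finset.range (n+1), C ^ (j + 1) * α ^ j) = C * α * Sn + C := by
        rw [Finset.sum_range_succ', hSndef, Finset.mul_sum]
        congr 1
        · exact Finset.sum_congr rfl fun j _ => by ring
        · norm_num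
      have e1 : P^[n+1] (Measure.dirac x) = P (P^[n] (Measure.dirac x)) :=
        Function.iterate_succ_apply' P n _
      have e2 : Pe^[n+1] (Measure.dirac x) = Pe (Pe^[n] (Measure.dirac x)) :=
        Function.iterate_succ_apply' Pe n _
      have hwt := hwtri (P (P^[n] (Measure.dirac x))) (Pe (Pe^[n] (Measure.dirac x)))
        (P (Pe^[n] (Measure.dirac x)))
      have hc1 : dt (P (P^[n] (Measure.dirac x))) (P (Pe^[n] (Measure.dirac x)))
          ≤ α * (ε * Sn * (1 + δ * M)) := by
        exact (hcontr (P^[n] (Measure.dirac x)) (Pe^[n] (Measure.dirac x))).trans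
          (mul_le_mul_of_nonneg_left ih hα0.le)
      have hc2 : dt (P (Pe^[n] (Measure.dirac x))) (Pe (Pe^[n] (Measure.dirac x)))
          ≤ ε * (1 + δ * M) := by
        have h := hclose _ (probIter n)
        have h2 : (1:ℝ) + δ * ∫ y, V y ∂(Pe^[n] (Measure.dirac x)) ≤ 1 + δ * M := by
          have := mul_le_mul_of_nonneg_left (hIM n) hδ
          linarith
        exact h.trans (mul_le_mul_of_nonneg_left h2 hε)
      rw [e1, e2, hSsucc]
      have hfinal : dt (P (P^[n] (Measure.dirac x))) (Pe (Pe^[n] (Measure.dirac x)))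
          ≤ C * (α * (ε * Sn * (1 + δ * M)) + ε * (1 + δ * M)) :=
        hwt.trans (mul_le_mul_of_nonneg_left (add_le_add hc1 hc2) hC.le)
      calc dt (P (P^[n] (Measure.dirac x))) (Pe (Pe^[n] (Measure.dirac x)))
          ≤ C * (α * (ε * Sn * (1 + δ * M)) + ε * (1 + δ * M)) := hfinal
        _ = ε * (C * α * Sn + C) * (1 + δ * M) := by ring
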